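/- Let G be a nonabelian torsion-free nilpotent group with an involution * : G → G (anti-automorphism of order 2). Then G contains elements x, y with (x,y) ≠ 1, (x,(x,y)) = (y,(x,y)) = 1, x* = x^{±1} and y* = y^{±1}; i.e. G contains a *-invariant subgroup isomorphic to the discrete Heisenberg group on which * restricts to one of the three main involutions. -/

import Mathlib

/-- Generic "fixing-up" lemma: given an automorphism `τ` of order 2 of a nilpotent
torsion-free group, a `τ`-invariant subgroup `H`, and a map `φ` that is multiplicative
on `H` with pairwise commuting values on `H`, any `g0 ∈ H` with `φ g0 ≠ 1` can be
replaced by `y ∈ H` with `τ y = y` or `τ y = y⁻¹` and `φ y ≠ 1`. -/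
lemma heis_aux {G : Type} [Group G]
    (τ : G → G) (hm : ∀ a b : G, τ (a * b) = τ a * τ b) (h2 : ∀ a : G, τ (τ a) = a)
    (htf : ∀ g : G, g ≠ 1 → ¬IsOfFinOrder g)
    (N : ℕ) (hN : Subgroup.lowerCentralSeries (⊤ : Subgroup G) N = ⊥)
    (H : Subgroup G) (hH : ∀ a ∈ H, τ a ∈ H)
    (φ : G → G)
    (hφ : ∀ a ∈ H, ∀ b ∈ H, φ (a * b) = φ a * φ b)
    (hc : ∀ a ∈ H, ∀ b ∈ H, Commute (φ a) (φ b))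
    (g0 : G) (hg0 : g0 ∈ H) (hg0' : φ g0 ≠ 1) :
    ∃ y, y ∈ H ∧ (τ y = y ∨ τ y = y⁻¹) ∧ φ y ≠ 1 := by
  -- basic facts about τ
  have hτ1 : τ 1 = 1 := by
    have := hm 1 1
    rw [mul_one] at this
    exact left_eq_mul.mp this
  have hτinv : ∀ a : G, τ a⁻¹ = (τ a)⁻¹ := by
    intro a
    have := hm a⁻¹ a
    rw [inv_mul_cancel, hτ1] at this
    exact eq_inv_of_mul_eq_one_left this.symm
  -- basic facts about φ
  have hφ1 : φ 1 = 1 := by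
    have := hφ 1 (one_mem H) 1 (one_mem H)
    rw [mul_one] at this
    exact left_eq_mul.mp this
  have hφinv : ∀ a ∈ H, φ a⁻¹ = (φ a)⁻¹ := by
    intro a ha
    have := hφ a⁻¹ (inv_mem ha) a ha
    rw [inv_mul_cancel, hφ1] at this
    exact eq_inv_of_mul_eq_one_left this.symm
  -- torsion-free: powers
  have hpow : ∀ (a : G) (n : ℕ), n ≠ 0 → a ^ n = 1 → a = 1 := by
    intro a n hn han
    by_contra h1
    exact htf a h1 (isOfFinOrder_iff_pow_eq_one.mpr ⟨n, Nat.pos_of_ne_zero hn, han⟩)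
  -- the iteration
  let w : ℕ → G := fun k => Nat.rec g0 (fun _ wk => wk * τ wk) k
  have hw0 : w 0 = g0 := rfl
  have hwsucc : ∀ k, w (k + 1) = w k * τ (w k) := fun k => rfl
  have hwH : ∀ k, w k ∈ H := by
    intro k
    induction k with
    | zero => exact hg0
    | succ k ih => exact mul_mem ih (hH _ ih)
  let d : ℕ → G := fun k => (w k)⁻¹ * τ (w k)
  have hdH : ∀ k, d k ∈ H := fun k => mul_mem (inv_mem (hwH k)) (hH _ (hwH k))
  have hτw : ∀ k, τ (w k) = w k * d k := by
    intro k; simp [d, mul_inv_cancel_left]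
  have hdrec : ∀ k, d (k + 1) = (d k)⁻¹ * (w k)⁻¹ * d k * w k := by
    intro k
    show (w k * τ (w k))⁻¹ * τ (w k * τ (w k)) = _
    rw [hm, h2]
    simp only [d]
    group
  have hdγ : ∀ k, d k ∈ Subgroup.lowerCentralSeries (⊤ : Subgroup G) k := by
    intro k
    induction k with
    | zero => rw [Subgroup.lowerCentralSeries_zero]; trivial
    | succ k ih =>
      rw [hdrec k, Subgroup.lowerCentralSeries_succ]
      apply Subgroup.subset_closure
      refine ⟨(d k)⁻¹, inv_mem ih, (w k)⁻¹, trivial, ?_⟩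
      group
  have hφd : ∀ k, φ (d (k + 1)) = 1 := by
    intro k
    rw [hdrec k]
    have h1 := hdH k
    have h2' := hwH k
    rw [hφ _ (mul_mem (mul_mem (inv_mem h1) (inv_mem h2')) h1) _ h2',
        hφ _ (mul_mem (inv_mem h1) (inv_mem h2')) _ h1,
        hφ _ (inv_mem h1) _ (inv_mem h2'), hφinv _ h1, hφinv _ h2']
    have hcc := (hc _ h1 _ h2').eq
    calc (φ (d k))⁻¹ * (φ (w k))⁻¹ * φ (d k) * φ (w k)
        = (φ (d k))⁻¹ * (φ (w k))⁻¹ * (φ (d k) * φ (w k)) := by group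
      _ = (φ (d k))⁻¹ * (φ (w k))⁻¹ * (φ (w k) * φ (d k)) := by rw [hcc]
      _ = 1 := by group
  have hφw : ∀ k, φ (w (k + 1)) = (φ (w 1)) ^ (2 ^ k) := by
    intro k
    induction k with
    | zero => simp
    | succ k ih =>
      rw [hwsucc (k + 1), hτw (k + 1),
        hφ _ (hwH (k + 1)) _ (mul_mem (hwH (k + 1)) (hdH (k + 1))),
        hφ _ (hwH (k + 1)) _ (hdH (k + 1)), hφd k, mul_one, ih, ← pow_add]
      congr 1
      ring
  by_cases hcase : φ (w 1) = 1
  · -- use the anti-fixed element g0 * (τ g0)⁻¹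
    have hτg0 : φ (τ g0) = (φ g0)⁻¹ := by
      have : φ (g0 * τ g0) = φ g0 * φ (τ g0) := hφ _ hg0 _ (hH _ hg0)
      have h' : φ g0 * φ (τ g0) = 1 := by rw [← this]; exact hcase
      exact eq_inv_of_mul_eq_one_right h'
    refine ⟨g0 * (τ g0)⁻¹, mul_mem hg0 (inv_mem (hH _ hg0)), Or.inr ?_, ?_⟩
    · rw [hm, hτinv, h2, mul_inv_rev, inv_inv]
    · rw [hφ _ hg0 _ (inv_mem (hH _ hg0)), hφinv _ (hH _ hg0), hτg0, inv_inv, ← pow_two]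
      intro h
      exact hg0' (hpow _ 2 (by norm_num) h)
  · -- use the fixed element w (N + 1)
    have hdN : d (N + 1) = 1 := by
      have h1 : d (N + 1) ∈ Subgroup.lowerCentralSeries (⊤ : Subgroup G) (N + 1) := hdγ (N + 1)
      have h2' : Subgroup.lowerCentralSeries (⊤ : Subgroup G) (N + 1) ≤ Subgroup.lowerCentralSeries (⊤ : Subgroup G) N :=
        Subgroup.lowerCentralSeries_antitone ⊤ (Nat.le_succ N)
      rw [hN] at h2'
      simpa using h2' h1
    refine ⟨w (N + 1), hwH (N + 1), Or.inl ?_, ?_⟩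
    · rw [hτw (N + 1), hdN, mul_one]
    · rw [hφw N]
      intro h
      exact hcase (hpow _ (2 ^ N) (by positivity) h)
theorem torsion_free_nilpotent_group_involution_heisenberg_pair
    (G : Type) [Group G] [Group.IsNilpotent G]
    (htf : ∀ g : G, g ≠ 1 → ¬IsOfFinOrder g)
    (hna : ∃ a b : G, a * b ≠ b * a)
    (σ : G → G)
    (hanti : ∀ a b : G, σ (a * b) = σ b * σ a)
    (hinv : ∀ a : G, σ (σ a) = a) :
    ∃ x y : G,
      x⁻¹ * y⁻¹ * x * y ≠ 1 ∧
      x⁻¹ * (x⁻¹ * y⁻¹ * x * y)⁻¹ * x * (x⁻¹ * y⁻¹ * x * y) = 1 ∧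
      y⁻¹ * (x⁻¹ * y⁻¹ * x * y)⁻¹ * y * (x⁻¹ * y⁻¹ * x * y) = 1 ∧
      (σ x = x ∨ σ x = x⁻¹) ∧ (σ y = y ∨ σ y = y⁻¹) := by
  -- the associated automorphism of order two
  set τ : G → G := fun g => (σ g)⁻¹ with hτdef
  have hσ1 : σ 1 = 1 := by
    have := hanti 1 1
    rw [mul_one] at this
    exact left_eq_mul.mp this
  have hσinv : ∀ a : G, σ a⁻¹ = (σ a)⁻¹ := by
    intro a
    have := hanti a a⁻¹
    rw [mul_inv_cancel, hσ1] at this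
    exact eq_inv_of_mul_eq_one_left this.symm
  have hm : ∀ a b : G, τ (a * b) = τ a * τ b := by
    intro a b
    simp only [hτdef, hanti, mul_inv_rev]
  have h2 : ∀ a : G, τ (τ a) = a := by
    intro a
    simp only [hτdef, hσinv, inv_inv, hinv]
  -- τ preserves the upper central series
  have hτZ : ∀ n : ℕ, ∀ a ∈ Subgroup.upperCentralSeries G n, τ a ∈ Subgroup.upperCentralSeries G n := by
    intro n
    induction n with
    | zero =>
      intro a ha
      rw [Subgroup.upperCentralSeries_zero, Subgroup.mem_bot] at *
      rw [ha]
      simp [hτdef, hσ1]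
    | succ n ih =>
      intro a ha
      rw [Subgroup.mem_upperCentralSeries_succ_iff] at *
      intro y
      have hτi : ∀ c : G, τ c⁻¹ = (τ c)⁻¹ := by
        intro c; simp only [hτdef, hσinv, inv_inv]
      have key : τ (a * τ y * a⁻¹ * (τ y)⁻¹) = τ a * y * (τ a)⁻¹ * y⁻¹ := by
        rw [hm (a * τ y * a⁻¹) ((τ y)⁻¹), hm (a * τ y) a⁻¹, hm a (τ y),
          hτi a, hτi (τ y), h2 y]
      rw [commutatorElement_def, ← key]
      exact ih _ (by have := ha (τ y); rw [commutatorElement_def] at this; exact this)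
  -- centrality of commutators with elements of the second center
  have hcent : ∀ z ∈ Subgroup.upperCentralSeries G 2, ∀ g t : G,
      (z * g * z⁻¹ * g⁻¹) * t = t * (z * g * z⁻¹ * g⁻¹) := by
    intro z hz g t
    have h := (Subgroup.mem_upperCentralSeries_succ_iff.mp hz) g
    rw [Subgroup.upperCentralSeries_one] at h
    exact ((Subgroup.mem_center_iff.mp h) t).symm
  -- get an element of the second center not in the center
  have hZ2 : ∃ x0 ∈ Subgroup.upperCentralSeries G 2, x0 ∉ Subgroup.center G := by
    by_contra hcon
    push_neg at hcon
    have hle : Subgroup.upperCentralSeries G 2 ≤ Subgroup.center G := hcon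
    have hall : ∀ n : ℕ, Subgroup.upperCentralSeries G (n + 1) ≤ Subgroup.center G := by
      intro n
      induction n with
      | zero => rw [Subgroup.upperCentralSeries_one]
      | succ n ih =>
        intro z hz
        apply hle
        rw [Subgroup.mem_upperCentralSeries_succ_iff]
        intro y
        rw [Subgroup.upperCentralSeries_one]
        exact ih ((Subgroup.mem_upperCentralSeries_succ_iff.mp hz) y)
    obtain ⟨n, hn⟩ := Group.IsNilpotent.nilpotent' (G := G)
    obtain ⟨a, b, hab⟩ := hna
    have ha : a ∈ Subgroup.center G := by
      apply hall n
      apply Subgroup.upperCentralSeries_mono G (Nat.le_succ n)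
      rw [hn]
      trivial
    exact hab (Subgroup.mem_center_iff.mp ha b).symm
  obtain ⟨x0, hx0Z, hx0c⟩ := hZ2
  obtain ⟨g0, hg0⟩ : ∃ g0 : G, g0 * x0 ≠ x0 * g0 := by
    by_contra hcon
    push_neg at hcon
    exact hx0c (Subgroup.mem_center_iff.mpr hcon)
  -- nilpotency in terms of the lower central series
  obtain ⟨N, hN⟩ := Subgroup.nilpotent_iff_lowerCentralSeries.mp (inferInstance : Group.IsNilpotent G)
  -- Step 1: fix up x inside the second center
  have hmulZ2 : ∀ a ∈ Subgroup.upperCentralSeries G 2, ∀ b ∈ Subgroup.upperCentralSeries G 2,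
      (a * b) * g0 * (a * b)⁻¹ * g0⁻¹ = (a * g0 * a⁻¹ * g0⁻¹) * (b * g0 * b⁻¹ * g0⁻¹) := by
    intro a ha b hb
    calc (a * b) * g0 * (a * b)⁻¹ * g0⁻¹
        = a * ((b * g0 * b⁻¹ * g0⁻¹) * (g0 * a⁻¹ * g0⁻¹)) := by group
      _ = a * ((g0 * a⁻¹ * g0⁻¹) * (b * g0 * b⁻¹ * g0⁻¹)) := by
          rw [hcent b hb g0 (g0 * a⁻¹ * g0⁻¹)]
      _ = (a * g0 * a⁻¹ * g0⁻¹) * (b * g0 * b⁻¹ * g0⁻¹) := by group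
  have hφx0 : x0 * g0 * x0⁻¹ * g0⁻¹ ≠ 1 := by
    intro h
    apply hg0
    have : x0 * g0 * x0⁻¹ = g0 := by
      have := mul_eq_one_iff_eq_inv.mp h
      rw [this]; group
    calc g0 * x0 = (x0 * g0 * x0⁻¹) * x0 := by rw [this]
      _ = x0 * g0 := by group
  obtain ⟨x, hxZ, hτx, hφx⟩ := heis_aux τ hm h2 htf N hN
    (Subgroup.upperCentralSeries G 2) (hτZ 2)
    (fun z => z * g0 * z⁻¹ * g0⁻¹) hmulZ2
    (fun a ha b _ => hcent a ha g0 _)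
    x0 hx0Z hφx0
  -- Step 2: fix up y in the whole group
  have hmulG : ∀ (a b : G),
      x * (a * b) * x⁻¹ * (a * b)⁻¹ = (x * a * x⁻¹ * a⁻¹) * (x * b * x⁻¹ * b⁻¹) := by
    intro a b
    calc x * (a * b) * x⁻¹ * (a * b)⁻¹
        = (x * a * x⁻¹) * ((x * b * x⁻¹ * b⁻¹) * a⁻¹) := by group
      _ = (x * a * x⁻¹) * (a⁻¹ * (x * b * x⁻¹ * b⁻¹)) := by
          rw [hcent x hxZ b a⁻¹]
      _ = (x * a * x⁻¹ * a⁻¹) * (x * b * x⁻¹ * b⁻¹) := by group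
  obtain ⟨y, -, hτy, hφy⟩ := heis_aux τ hm h2 htf N hN
    (⊤ : Subgroup G) (fun a _ => trivial)
    (fun g => x * g * x⁻¹ * g⁻¹) (fun a _ b _ => hmulG a b)
    (fun a _ b _ => hcent x hxZ a _)
    g0 trivial hφx
  -- Assemble the conclusion
  refine ⟨x, y, ?_, ?_, ?_, ?_, ?_⟩
  · intro h
    apply hφy
    have hyx : x * y = y * x := by
      calc x * y = y * x * (x⁻¹ * y⁻¹ * x * y) := by group
        _ = y * x := by rw [h]; group
    calc x * y * x⁻¹ * y⁻¹ = (x * y) * x⁻¹ * y⁻¹ := by group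
      _ = (y * x) * x⁻¹ * y⁻¹ := by rw [hyx]
      _ = 1 := by group
  · -- the commutator is central since x is in the second center
    have hc' : ∀ t : G, (x⁻¹ * y⁻¹ * x * y) * t = t * (x⁻¹ * y⁻¹ * x * y) := by
      intro t
      have := hcent x⁻¹ (inv_mem hxZ) y⁻¹ t
      simpa using this
    have hc'' : ∀ t : G, (x⁻¹ * y⁻¹ * x * y)⁻¹ * t = t * (x⁻¹ * y⁻¹ * x * y)⁻¹ := by
      intro t
      have := hc' t
      calc (x⁻¹ * y⁻¹ * x * y)⁻¹ * t
          = (x⁻¹ * y⁻¹ * x * y)⁻¹ * (t * (x⁻¹ * y⁻¹ * x * y)) * (x⁻¹ * y⁻¹ * x * y)⁻¹ := by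
            group
        _ = (x⁻¹ * y⁻¹ * x * y)⁻¹ * ((x⁻¹ * y⁻¹ * x * y) * t) * (x⁻¹ * y⁻¹ * x * y)⁻¹ := by
            rw [this]
        _ = t * (x⁻¹ * y⁻¹ * x * y)⁻¹ := by group
    calc x⁻¹ * (x⁻¹ * y⁻¹ * x * y)⁻¹ * x * (x⁻¹ * y⁻¹ * x * y)
        = x⁻¹ * ((x⁻¹ * y⁻¹ * x * y)⁻¹ * x) * (x⁻¹ * y⁻¹ * x * y) := by group
      _ = x⁻¹ * (x * (x⁻¹ * y⁻¹ * x * y)⁻¹) * (x⁻¹ * y⁻¹ * x * y) := by rw [hc'' x]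
      _ = 1 := by group
  · have hc' : ∀ t : G, (x⁻¹ * y⁻¹ * x * y) * t = t * (x⁻¹ * y⁻¹ * x * y) := by
      intro t
      have := hcent x⁻¹ (inv_mem hxZ) y⁻¹ t
      simpa using this
    have hc'' : ∀ t : G, (x⁻¹ * y⁻¹ * x * y)⁻¹ * t = t * (x⁻¹ * y⁻¹ * x * y)⁻¹ := by
      intro t
      have := hc' t
      calc (x⁻¹ * y⁻¹ * x * y)⁻¹ * t
          = (x⁻¹ * y⁻¹ * x * y)⁻¹ * (t * (x⁻¹ * y⁻¹ * x * y)) * (x⁻¹ * y⁻¹ * x * y)⁻¹ := by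
            group
        _ = (x⁻¹ * y⁻¹ * x * y)⁻¹ * ((x⁻¹ * y⁻¹ * x * y) * t) * (x⁻¹ * y⁻¹ * x * y)⁻¹ := by
            rw [this]
        _ = t * (x⁻¹ * y⁻¹ * x * y)⁻¹ := by group
    calc y⁻¹ * (x⁻¹ * y⁻¹ * x * y)⁻¹ * y * (x⁻¹ * y⁻¹ * x * y)
        = y⁻¹ * ((x⁻¹ * y⁻¹ * x * y)⁻¹ * y) * (x⁻¹ * y⁻¹ * x * y) := by group
      _ = y⁻¹ * (y * (x⁻¹ * y⁻¹ * x * y)⁻¹) * (x⁻¹ * y⁻¹ * x * y) := by rw [hc'' y]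
      _ = 1 := by group
  · rcases hτx with h | h
    · right
      have h' := congrArg (·⁻¹) h
      simpa [hτdef] using h'
    · left
      have h' := congrArg (·⁻¹) h
      simpa [hτdef] using h'
  · rcases hτy with h | h
    · right
      have h' := congrArg (·⁻¹) h
      simpa [hτdef] using h'
    · left
      have h' := congrArg (·⁻¹) h
      simpa [hτdef] using h'
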